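/- Let G be a digraph and s, t vertices with dist_G(s,t) < ∞. Then there exists a simple s-to-t path in G of length strictly greater than dist_G(s,t) if and only if there exist a natural number p and distinct vertices x ≠ y with dist_G(s,x) = dist_G(s,y) = p, together with an x-to-y path P_1 and a y-to-t path P_2, both contained in the induced subgraph G_{≥p} on {v : dist_G(s,v) ≥ p}, such that P_1 and P_2 are internally vertex-disjoint. -/

import Mathlib

variable {V : Type*}

/-- `w` is a directed walk from `u` to `v` in the digraph with arc relation `A`:
a nonempty list of vertices whose consecutive members are joined by arcs,
starting at `u` and ending at `v`. -/
def IsDiWalk (A : V → V → Prop) (u v : V) (w : List V) : Prop :=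
  w.Chain' A ∧ w.head? = some u ∧ w.getLast? = some v

/-- The length (number of arcs) of a walk represented as its list of vertices. -/
def walkLength (w : List V) : ℕ :=
  w.length - 1

/-- `w` is a simple directed path from `u` to `v`. -/
def IsDiPath (A : V → V → Prop) (u v : V) (w : List V) : Prop :=
  IsDiWalk A u v w ∧ w.Nodup

/-- Directed distance from `u` to `v`: the minimum length of a directed
`u`-to-`v` walk, or `⊤` if `v` is unreachable from `u`. -/
noncomputable def ddist (A : V → V → Prop) (u v : V) : ℕ∞ :=
  ⨅ (w : List V) (_ : IsDiWalk A u v w), (walkLength w : ℕ∞)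

/-- The internal (non-endpoint) vertices of a path represented as a list. -/
def internalVerts (w : List V) : List V :=
  w.tail.dropLast

/-- Two paths are internally vertex-disjoint if no internal vertex of either
lies on the other. -/
def InternallyDisjoint (w₁ w₂ : List V) : Prop :=
  (∀ a ∈ internalVerts w₁, a ∉ w₂) ∧ (∀ a ∈ internalVerts w₂, a ∉ w₁)

/-- All vertices of `w` lie in the induced subgraph `G_{≥p}` (with respect to
source `s`), i.e. have distance at least `p` from `s`. A path satisfying
`IsDiPath A x y w` together with `InGeq A s p w` is exactly a path of the
induced subgraph of `G` on `{v : dist_G(s,v) ≥ p}`. -/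
def InGeq (A : V → V → Prop) (s : V) (p : ℕ) (w : List V) : Prop :=
  ∀ a ∈ w, (p : ℕ∞) ≤ ddist A s a

variable {A : V → V → Prop} {u v z b s x t : V} {w w₁ w₂ : List V}

lemma IsDiWalk.ne_nil (h : IsDiWalk A u v w) : w ≠ [] := by
  rintro rfl; simp [IsDiWalk] at h

lemma IsDiWalk.length_pos (h : IsDiWalk A u v w) : 0 < w.length :=
  List.length_pos_iff.mpr h.ne_nil

lemma IsDiWalk.head_mem (h : IsDiWalk A u v w) : u ∈ w :=
  List.mem_of_mem_head? (by rw [h.2.1]; simp)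

lemma IsDiWalk.last_mem (h : IsDiWalk A u v w) : v ∈ w :=
  List.mem_of_getLast? h.2.2

lemma IsDiWalk.head_eq (h : IsDiWalk A u v w) : w.head h.ne_nil = u := by
  have h2 := h.2.1
  rw [List.head?_eq_head h.ne_nil] at h2
  simpa using h2

lemma IsDiWalk.getLast_eq (h : IsDiWalk A u v w) : w.getLast h.ne_nil = v := by
  have h2 := h.2.2
  rw [List.getLast?_eq_getLast h.ne_nil] at h2
  simpa using h2

lemma IsDiWalk.one_lt_length (h : IsDiWalk A u v w) (hne : u ≠ v) : 2 ≤ w.length := by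
  have h1 := h.head_eq
  have h2 := h.getLast_eq
  have h3 := h.length_pos
  rcases w with _ | ⟨a, l⟩
  · simp at h3
  rcases l with _ | ⟨c, l'⟩
  · simp at h1 h2; exact absurd (h1 ▸ h2 ▸ rfl) hne.symm
  · simp

lemma ddist_le (h : IsDiWalk A u v w) : ddist A u v ≤ (walkLength w : ℕ∞) :=
  iInf₂_le w h

lemma ddist_self (A : V → V → Prop) (u : V) : ddist A u u = 0 := by
  have : IsDiWalk A u u [u] := by simp [IsDiWalk, List.Chain']
  simpa [walkLength] using ddist_le this

lemma exists_walk {n : ℕ} (h : ddist A u v = (n : ℕ∞)) :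
    ∃ w, IsDiWalk A u v w ∧ walkLength w = n := by
  have hlt : ddist A u v < (n : ℕ∞) + 1 := by
    rw [h]; exact_mod_cast Nat.lt_succ_self n
  rw [ddist, iInf_lt_iff] at hlt
  obtain ⟨w, hw⟩ := hlt
  rw [iInf_lt_iff] at hw
  obtain ⟨hw, hlen⟩ := hw
  refine ⟨w, hw, le_antisymm ?_ ?_⟩
  · have : (walkLength w : ℕ∞) < n + 1 := hlen
    exact_mod_cast Order.lt_add_one_iff.mp (by exact_mod_cast this)
  · have := ddist_le hw
    rw [h] at this
    exact_mod_cast this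

lemma IsDiWalk.take (h : IsDiWalk A u v w) {k : ℕ} (hk : k < w.length) :
    IsDiWalk A u (w[k]) (w.take (k + 1)) := by
  obtain ⟨hc, hh, hl⟩ := h
  have hlen : (w.take (k+1)).length = k + 1 := by
    rw [List.length_take]; omega
  refine ⟨hc.prefix (List.take_prefix _ _), ?_, ?_⟩
  · rw [List.head?_eq_head (by rw [← List.length_pos_iff, hlen]; omega), ← hh,
      List.head?_eq_head (by rw [← List.length_pos_iff]; omega)]
    congr 1
    rw [List.head_eq_getElem, List.head_eq_getElem, List.getElem_take]
  · rw [List.getLast?_eq_getElem?, hlen]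
    simp only [Nat.add_sub_cancel]
    rw [List.getElem?_eq_getElem (by omega), List.getElem_take]

lemma IsDiWalk.drop (h : IsDiWalk A u v w) {k : ℕ} (hk : k < w.length) :
    IsDiWalk A (w[k]) v (w.drop k) := by
  obtain ⟨hc, hh, hl⟩ := h
  refine ⟨hc.suffix (List.drop_suffix _ _), ?_, ?_⟩
  · rw [List.head?_drop, List.getElem?_eq_getElem hk]
  · rw [List.getLast?_eq_getElem?] at hl ⊢
    rw [List.length_drop, List.getElem?_eq_getElem (by rw [List.length_drop]; omega),
      List.getElem_drop]
    rw [List.getElem?_eq_getElem (by omega)] at hl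
    convert hl using 3
    omega

lemma getLast?_cons_ne {a : V} {l : List V} (h : l ≠ []) :
    (a :: l).getLast? = l.getLast? := by
  rw [List.getLast?_eq_getLast (by simp), List.getLast?_eq_getLast h,
    List.getLast_cons h]

lemma IsDiWalk.append (h₁ : IsDiWalk A u v w₁) (h₂ : IsDiWalk A v z w₂) :
    IsDiWalk A u z (w₁ ++ w₂.tail) := by
  obtain ⟨c₁, hh₁, hl₁⟩ := h₁
  obtain ⟨c₂, hh₂, hl₂⟩ := h₂
  match w₂, hh₂ with
  | v' :: tw, hh₂ =>
  obtain rfl : v = v' := by symm; simpa using hh₂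
  simp only [List.tail_cons]
  rcases eq_or_ne tw [] with rfl | htw
  · obtain rfl : z = v := by symm; simpa using hl₂
    simpa [IsDiWalk] using ⟨c₁, hh₁, hl₁⟩
  · refine ⟨?_, ?_, ?_⟩
    · refine c₁.append (c₂.tail) ?_
      intro a ha y hy
      rw [hl₁] at ha
      obtain rfl : v = a := by simpa using ha
      exact (List.isChain_cons.mp c₂).1 y hy
    · rw [List.head?_append, hh₁]; rfl
    · have hl₂' : tw.getLast? = some z := by rwa [getLast?_cons_ne htw] at hl₂
      rw [List.getLast?_append, hl₂']; rfl

lemma IsDiWalk.snoc (h : IsDiWalk A u v w) (hb : A v b) : IsDiWalk A u b (w ++ [b]) := by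
  have h2 : IsDiWalk A v b [v, b] := ⟨by simp [hb, List.Chain'], rfl, rfl⟩
  simpa using h.append h2

lemma walkLength_append (h₁ : w₁ ≠ []) :
    walkLength (w₁ ++ w₂.tail) = walkLength w₁ + walkLength w₂ := by
  have := List.length_pos_iff.mpr h₁
  simp only [walkLength, List.length_append, List.length_tail]
  omega

lemma erase_loops : ∀ (n : ℕ) (w : List V), w.length ≤ n → ∀ u v, IsDiWalk A u v w →
    ∃ w', IsDiWalk A u v w' ∧ w'.Nodup ∧ w'.length ≤ w.length ∧ ∀ a ∈ w', a ∈ w := by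
  intro n
  induction n with
  | zero =>
    intro w hw u v h
    have : w ≠ [] := by rintro rfl; simp [IsDiWalk] at h
    have := List.length_pos_iff.mpr this
    omega
  | succ n ih =>
    intro w hw u v h
    obtain ⟨hc, hh, hl⟩ := h
    match w, hh with
    | u' :: rest, hh =>
    obtain rfl : u = u' := by symm; simpa using hh
    by_cases hu : u ∈ rest
    · obtain ⟨b, c', rfl⟩ := List.append_of_mem hu
      have hsuf : (u :: c') <:+ (u :: (b ++ u :: c')) := ⟨u :: b, by simp⟩
      have hlast : (u :: (b ++ u :: c')).getLast? = (u :: c').getLast? := by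
        rw [getLast?_cons_ne (by simp : (b ++ u :: c') ≠ []), List.getLast?_append,
          List.getLast?_eq_getLast (by simp : (u :: c') ≠ [])]
        rfl
      have hw2 : IsDiWalk A u v (u :: c') := ⟨hc.suffix hsuf, rfl, by rw [← hlast, hl]⟩
      obtain ⟨w', h1, h2, h3, h4⟩ := ih (u :: c') (by simp at hw ⊢; omega) u v hw2
      refine ⟨w', h1, h2, by simp at h3 ⊢; omega, fun a ha => ?_⟩
      have := h4 a ha
      simp at this ⊢
      tauto
    · match rest with
      | [] => exact ⟨[u], ⟨by simp [List.Chain'], rfl, hl⟩, by simp, by simp, by simp⟩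
      | r :: rest' =>
        have hw2 : IsDiWalk A r v (r :: rest') :=
          ⟨hc.tail, rfl, by rw [← getLast?_cons_ne (l := r :: rest') (by simp), hl]⟩
        obtain ⟨w', h1, h2, h3, h4⟩ := ih (r :: rest') (by simp at hw ⊢; omega) r v hw2
        have hwne : w' ≠ [] := by rintro rfl; simp [IsDiWalk] at h1
        refine ⟨u :: w', ⟨?_, rfl, ?_⟩, ?_, ?_, ?_⟩
        · rw [List.Chain', List.isChain_cons]
          refine ⟨fun y hy => ?_, h1.1⟩
          rw [h1.2.1] at hy
          obtain rfl : r = y := by simpa using hy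
          exact (List.isChain_cons_cons.mp hc).1
        · rw [getLast?_cons_ne hwne, h1.2.2]
        · refine List.nodup_cons.mpr ⟨fun hmem => hu ?_, h2⟩
          exact h4 u hmem
        · simp at h3 ⊢; omega
        · intro a ha
          rcases List.mem_cons.mp ha with rfl | ha
          · exact List.mem_cons_self
          · exact List.mem_cons_of_mem _ (h4 a ha)

lemma exists_nodup_shortest {p : ℕ} (h : ddist A s x = (p : ℕ∞)) :
    ∃ Q, IsDiWalk A s x Q ∧ Q.Nodup ∧ Q.length = p + 1 ∧
      ∀ a ∈ Q.dropLast, ddist A s a < (p : ℕ∞) := by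
  obtain ⟨w, hw, hlen⟩ := exists_walk h
  obtain ⟨Q, hQ, hnd, hle, -⟩ := erase_loops w.length w le_rfl s x hw
  have hwpos := hw.length_pos
  have hQpos := hQ.length_pos
  have hp : (p : ℕ∞) ≤ (walkLength Q : ℕ∞) := h ▸ ddist_le hQ
  have hp' : p ≤ walkLength Q := by exact_mod_cast hp
  have hQlen : Q.length = p + 1 := by unfold walkLength at hlen hp'; omega
  refine ⟨Q, hQ, hnd, hQlen, ?_⟩
  intro a ha
  obtain ⟨k, hk, rfl⟩ := List.mem_iff_getElem.mp ha
  have hk0 : k < Q.dropLast.length := hk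
  rw [List.length_dropLast] at hk0
  have hk' : k < Q.length := by omega
  rw [List.getElem_dropLast]
  have h1 := ddist_le (hQ.take hk')
  have hlen2 : walkLength (Q.take (k+1)) = k := by
    unfold walkLength; rw [List.length_take]; omega
  rw [hlen2] at h1
  refine h1.trans_lt ?_
  exact_mod_cast (by omega : k < p)

lemma mem_dropLast_or {a : V} {l : List V} (ha : a ∈ l) (h : l ≠ []) :
    a ∈ l.dropLast ∨ a = l.getLast h := by
  rw [← List.dropLast_append_getLast h] at ha
  simpa [List.mem_append] using ha

lemma head_not_mem_tail (h : IsDiWalk A u v w) (hnd : w.Nodup) : u ∉ w.tail := by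
  intro hm
  have hh := h.head_eq
  rw [← List.cons_head_tail h.ne_nil, List.nodup_cons] at hnd
  rw [hh] at hnd
  exact hnd.1 hm

lemma getLast_tail (h : IsDiWalk A u v w) (h2 : w.tail ≠ []) : w.tail.getLast h2 = v := by
  have e1 : w.tail.getLast? = some v := by
    rw [← getLast?_cons_ne h2 (a := w.head h.ne_nil), List.cons_head_tail, h.2.2]
  rw [List.getLast?_eq_getLast h2] at e1
  simpa using e1

lemma mem_decomp (h : IsDiWalk A u v w) {a : V} (ha : a ∈ w) :
    a = u ∨ a = v ∨ a ∈ internalVerts w := by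
  rw [← List.cons_head_tail h.ne_nil] at ha
  rcases List.mem_cons.mp ha with rfl | ha
  · exact Or.inl h.head_eq
  · rcases eq_or_ne w.tail [] with htl | htl
    · rw [htl] at ha; simp at ha
    · rcases mem_dropLast_or ha htl with h1 | h1
      · exact Or.inr (Or.inr h1)
      · exact Or.inr (Or.inl (h1.trans (getLast_tail h htl)))

lemma append_nodup_helper {p : ℕ} {Q R : List V}
    (hQ : IsDiWalk A s z Q) (hQnd : Q.Nodup)
    (hQd : ∀ a ∈ Q.dropLast, ddist A s a < (p : ℕ∞))
    (hR : IsDiWalk A z v R) (hRnd : R.Nodup)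
    (hRg : ∀ a ∈ R, (p : ℕ∞) ≤ ddist A s a) :
    (Q ++ R.tail).Nodup := by
  rw [List.nodup_append]
  refine ⟨hQnd, (List.tail_sublist R).nodup hRnd, ?_⟩
  intro a haQ b haR hab; subst hab
  have haR' : a ∈ R := List.mem_of_mem_tail haR
  rcases mem_dropLast_or haQ hQ.ne_nil with h1 | h1
  · exact absurd (hRg a haR') (not_le.mpr (hQd a h1))
  · rw [h1, hQ.getLast_eq] at haR
    exact head_not_mem_tail hR hRnd haR

lemma claim : ∀ (l : ℕ) (g : ℕ → ℕ), g 0 = 0 → (∀ i, i < l → g (i+1) ≤ g i + 1) →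
    g l < l → ∃ i j, i < j ∧ j ≤ l ∧ g i = g j ∧ ∀ k, i ≤ k → k ≤ l → g i ≤ g k := by
  intro l
  induction l with
  | zero => intro g h0 _ hl; omega
  | succ l ih =>
    intro g h0 hstep hl
    by_cases hz : ∃ j, 1 ≤ j ∧ j ≤ l + 1 ∧ g j = 0
    · obtain ⟨j, hj1, hj2, hj3⟩ := hz
      exact ⟨0, j, by omega, hj2, by omega, fun k _ _ => by omega⟩
    · push_neg at hz
      have hpos : ∀ j, 1 ≤ j → j ≤ l + 1 → 1 ≤ g j := by
        intro j h1 h2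
        have := hz j h1 h2
        omega
      have hg1 : g 1 = 1 := by
        have h1 := hstep 0 (by omega)
        have h2 := hpos 1 (by omega) (by omega)
        have hb : g (0+1) = g 1 := rfl
        omega
      obtain ⟨i, j, hij, hjl, heq, hsuf⟩ :=
        ih (fun k => g (k+1) - 1) (by simp [hg1])
          (fun i hi => by
            show g (i+1+1) - 1 ≤ g (i+1) - 1 + 1
            have h1 := hstep (i+1) (by omega)
            have h2 := hpos (i+1) (by omega) (by omega)
            have h3 := hpos (i+2) (by omega) (by omega)
            have hb : g (i+1+1) = g (i+2) := rfl
            omega)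
          (by
            show g (l+1) - 1 < l
            have := hpos (l+1) (by omega) (by omega)
            omega)
      have heq' : g (i+1) - 1 = g (j+1) - 1 := heq
      have hsuf' : ∀ k, i ≤ k → k ≤ l → g (i+1) - 1 ≤ g (k+1) - 1 := hsuf
      refine ⟨i+1, j+1, by omega, by omega, ?_, ?_⟩
      · have h2 := hpos (i+1) (by omega) (by omega)
        have h3 := hpos (j+1) (by omega) (by omega)
        omega
      · intro k hk1 hk2
        have h4 := hsuf' (k-1) (by omega) (by omega)
        have h2 := hpos (i+1) (by omega) (by omega)
        have h5 := hpos k (by omega) (by omega)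
        have : k - 1 + 1 = k := by omega
        rw [this] at h4
        omega

/-- correctness of the reduction from Directed Detour to
2-Disjoint-Detour-Paths: there is a simple `s`-to-`t` path longer than
`dist_G(s,t)` iff for some layer index `p` there are distinct `x ≠ y` in layer
`p` together with an `x`-to-`y` path and a `y`-to-`t` path, both contained in
`G_{≥p}`, that are internally vertex-disjoint. -/
theorem stmt8 (A : V → V → Prop) (s t : V) (hfin : ddist A s t < ⊤) :
    (∃ P : List V, IsDiPath A s t P ∧ ddist A s t < (walkLength P : ℕ∞)) ↔
      ∃ (p : ℕ) (x y : V), x ≠ y ∧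
        ddist A s x = (p : ℕ∞) ∧ ddist A s y = (p : ℕ∞) ∧
        ∃ P₁ P₂ : List V,
          IsDiPath A x y P₁ ∧ InGeq A s p P₁ ∧
          IsDiPath A y t P₂ ∧ InGeq A s p P₂ ∧
          InternallyDisjoint P₁ P₂ := by
  constructor
  · rintro ⟨P, ⟨hPw, hPnd⟩, hlen⟩
    have hn : 0 < P.length := hPw.length_pos
    have hd : ddist A s t = ((ddist A s t).toNat : ℕ∞) := (ENat.coe_toNat hfin.ne).symm
    set d : ℕ := (ddist A s t).toNat with hd_def
    have hdn : d < P.length - 1 := by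
      rw [hd] at hlen
      have h1 : d < walkLength P := by exact_mod_cast hlen
      unfold walkLength at h1
      exact h1
    have hfin_all : ∀ k, ∀ hk : k < P.length, ddist A s (P[k]'hk) ≤ (k : ℕ∞) := by
      intro k hk
      have h1 := ddist_le (hPw.take hk)
      have h2 : walkLength (P.take (k+1)) = k := by
        unfold walkLength; rw [List.length_take]; omega
      rwa [h2] at h1
    have hfin_all' : ∀ k, ∀ hk : k < P.length, ddist A s (P[k]'hk) ≠ ⊤ := by
      intro k hk
      exact ne_top_of_le_ne_top (by simp) (hfin_all k hk)
    set g : ℕ → ℕ := fun k => if hk : k < P.length then (ddist A s (P[k]'hk)).toNat else 0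
      with hg_def
    have hg : ∀ k, ∀ hk : k < P.length, ddist A s (P[k]'hk) = (g k : ℕ∞) := by
      intro k hk
      rw [hg_def]
      simp only [dif_pos hk]
      rw [ENat.coe_toNat (hfin_all' k hk)]
    have hg0 : g 0 = 0 := by
      have hP0 : P[0]'hn = s := by
        have h2 := hPw.head_eq
        rwa [List.head_eq_getElem] at h2
      rw [hg_def]
      simp only [dif_pos hn, hP0, ddist_self]
      rfl
    have harcstep : ∀ i, i < P.length - 1 → g (i+1) ≤ g i + 1 := by
      intro i hi
      have hi1 : i < P.length := by omega
      have hi2 : i + 1 < P.length := by omega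
      have harc : A (P[i]'hi1) (P[i+1]'hi2) := by
        have := List.isChain_iff_getElem.mp hPw.1 i (by omega)
        simpa using this
      obtain ⟨w, hw, hwlen⟩ := exists_walk (hg i hi1)
      have hsnoc := hw.snoc harc
      have hwpos := hw.length_pos
      have hlen2 : walkLength (w ++ [P[i+1]'hi2]) = g i + 1 := by
        unfold walkLength at hwlen ⊢
        rw [List.length_append]
        simp only [List.length_singleton]
        omega
      have h3 := ddist_le hsnoc
      rw [hlen2, hg (i+1) hi2] at h3
      exact_mod_cast h3
    have hglast : g (P.length - 1) = d := by
      have hl : P[P.length - 1]'(by omega) = t := by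
        have h2 := hPw.getLast_eq
        rwa [List.getLast_eq_getElem] at h2
      rw [hg_def]
      simp only [dif_pos (show P.length - 1 < P.length by omega), hl]
      rfl
    obtain ⟨i, j, hij, hjl, heq, hsuf⟩ := claim (P.length - 1) g hg0 harcstep (by omega)
    have hi : i < P.length := by omega
    have hj : j < P.length := by omega
    have hgeq : ∀ k, ∀ hk : k < P.length, i ≤ k → ((g i : ℕ) : ℕ∞) ≤ ddist A s (P[k]'hk) := by
      intro k hk hik
      rw [hg k hk]
      exact_mod_cast hsuf k hik (by omega)
    refine ⟨g i, P[i]'hi, P[j]'hj, ?_, hg i hi, by rw [hg j hj, heq], ?_⟩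
    · intro hxy
      have := (hPnd.getElem_inj_iff).mp hxy
      omega
    have hlen_take : (P.take (j+1)).length = j + 1 := by rw [List.length_take]; omega
    refine ⟨(P.take (j+1)).drop i, P.drop j, ⟨?_, ?_⟩, ?_,
      ⟨hPw.drop hj, (List.drop_sublist _ _).nodup hPnd⟩, ?_, ?_, ?_⟩
    · have h1 := hPw.take hj
      have h2 := h1.drop (k := i) (by rw [hlen_take]; omega)
      rwa [List.getElem_take] at h2
    · exact ((List.drop_sublist _ _).trans (List.take_sublist _ _)).nodup hPnd
    · intro a ha
      obtain ⟨m, hm, rfl⟩ := List.mem_iff_getElem.mp ha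
      have hm' : m < j + 1 - i := by
        rw [List.length_drop, hlen_take] at hm; omega
      have hkn : i + m < P.length := by omega
      have he : ((P.take (j+1)).drop i)[m]'hm = P[i+m]'hkn := by
        rw [List.getElem_drop, List.getElem_take]
      rw [he]
      exact hgeq (i+m) hkn (by omega)
    · intro a ha
      obtain ⟨m, hm, rfl⟩ := List.mem_iff_getElem.mp ha
      have hm' : m < P.length - j := by rw [List.length_drop] at hm; exact hm
      have hkn : j + m < P.length := by omega
      have he : (P.drop j)[m]'hm = P[j+m]'hkn := by rw [List.getElem_drop]
      rw [he]
      exact hgeq (j+m) hkn (by omega)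
    · intro a ha hamem
      simp only [internalVerts] at ha
      obtain ⟨m, hm, rfl⟩ := List.mem_iff_getElem.mp ha
      have hm0 := hm
      rw [List.length_dropLast, List.length_tail, List.length_drop, hlen_take] at hm0
      have hkn : i + (m+1) < P.length := by omega
      have he : (((P.take (j+1)).drop i).tail.dropLast)[m]'hm = P[i+(m+1)]'hkn := by
        rw [List.getElem_dropLast, List.getElem_tail, List.getElem_drop, List.getElem_take]
      rw [he] at hamem
      obtain ⟨m₂, hm₂, he₂⟩ := List.mem_iff_getElem.mp hamem
      have hm₂' : m₂ < P.length - j := by rw [List.length_drop] at hm₂; exact hm₂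
      rw [List.getElem_drop] at he₂
      have := (hPnd.getElem_inj_iff).mp he₂
      omega
    · intro a ha hamem
      simp only [internalVerts] at ha
      obtain ⟨m, hm, rfl⟩ := List.mem_iff_getElem.mp ha
      have hm0 := hm
      rw [List.length_dropLast, List.length_tail, List.length_drop] at hm0
      have hkn : j + (m+1) < P.length := by omega
      have he : ((P.drop j).tail.dropLast)[m]'hm = P[j+(m+1)]'hkn := by
        rw [List.getElem_dropLast, List.getElem_tail, List.getElem_drop]
      rw [he] at hamem
      obtain ⟨m₂, hm₂, he₂⟩ := List.mem_iff_getElem.mp hamem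
      have hm₂' : m₂ < j + 1 - i := by rw [List.length_drop, hlen_take] at hm₂; omega
      rw [List.getElem_drop, List.getElem_take] at he₂
      have := (hPnd.getElem_inj_iff).mp he₂
      omega
  · rintro ⟨p, x, y, hxy, hdx, hdy, P₁, P₂, ⟨hP₁w, hP₁nd⟩, hgeq₁, ⟨hP₂w, hP₂nd⟩, hgeq₂,
      hdisj₁, hdisj₂⟩
    have hd : ddist A s t = ((ddist A s t).toNat : ℕ∞) := (ENat.coe_toNat hfin.ne).symm
    set d : ℕ := (ddist A s t).toNat with hd_def
    have hpd : p ≤ d := by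
      have h1 := hgeq₂ t hP₂w.last_mem
      rw [hd] at h1
      exact_mod_cast h1
    have hP₁len : 2 ≤ P₁.length := hP₁w.one_lt_length hxy
    rcases eq_or_lt_of_le hpd with hdp | hdp
    · by_cases hyt : y = t
      · subst hyt
        obtain ⟨Q, hQw, hQnd, hQlen, hQd⟩ := exists_nodup_shortest hdx
        refine ⟨Q ++ P₁.tail,
          ⟨hQw.append hP₁w, append_nodup_helper hQw hQnd hQd hP₁w hP₁nd hgeq₁⟩, ?_⟩
        rw [hd, walkLength_append hQw.ne_nil]
        have e1 : walkLength Q = p := by unfold walkLength; omega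
        have e2 : 1 ≤ walkLength P₁ := by unfold walkLength; omega
        exact_mod_cast (by omega : d < walkLength Q + walkLength P₁)
      · obtain ⟨Q, hQw, hQnd, hQlen, hQd⟩ := exists_nodup_shortest hdy
        have hP₂len : 2 ≤ P₂.length := hP₂w.one_lt_length hyt
        refine ⟨Q ++ P₂.tail,
          ⟨hQw.append hP₂w, append_nodup_helper hQw hQnd hQd hP₂w hP₂nd hgeq₂⟩, ?_⟩
        rw [hd, walkLength_append hQw.ne_nil]
        have e1 : walkLength Q = p := by unfold walkLength; omega
        have e2 : 1 ≤ walkLength P₂ := by unfold walkLength; omega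
        exact_mod_cast (by omega : d < walkLength Q + walkLength P₂)
    · obtain ⟨Q, hQw, hQnd, hQlen, hQd⟩ := exists_nodup_shortest hdx
      have hW1 := hQw.append hP₁w
      have hW1nd := append_nodup_helper hQw hQnd hQd hP₁w hP₁nd hgeq₁
      refine ⟨(Q ++ P₁.tail) ++ P₂.tail, ⟨hW1.append hP₂w, ?_⟩, ?_⟩
      · rw [List.nodup_append]
        refine ⟨hW1nd, (List.tail_sublist P₂).nodup hP₂nd, ?_⟩
        intro a haQ b haR hab; subst hab
        have haR' : a ∈ P₂ := List.mem_of_mem_tail haR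
        rcases List.mem_append.mp haQ with h1 | h1
        · rcases mem_dropLast_or h1 hQw.ne_nil with h2 | h2
          · exact absurd (hgeq₂ a haR') (not_le.mpr (hQd a h2))
          · rw [h2, hQw.getLast_eq] at haR haR'
            rcases mem_decomp hP₂w haR' with h3 | h3 | h3
            · exact hxy h3
            · have e3 : (d : ℕ∞) = (p : ℕ∞) := by rw [← hd, ← hdx, h3]
              have e4 : d = p := by exact_mod_cast e3
              omega
            · exact hdisj₂ x h3 hP₁w.head_mem
        · have h1' : a ∈ P₁ := List.mem_of_mem_tail h1
          rcases eq_or_ne P₁.tail [] with htl | htl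
          · rw [htl] at h1; simp at h1
          rcases mem_dropLast_or h1 htl with h2 | h2
          · exact hdisj₁ a h2 haR'
          · rw [h2, getLast_tail hP₁w htl] at haR
            exact head_not_mem_tail hP₂w hP₂nd haR
      · obtain ⟨w₀, hw₀, hw₀len⟩ := exists_walk hdy
        have hub := ddist_le (hw₀.append hP₂w)
        rw [walkLength_append hw₀.ne_nil, hw₀len, hd] at hub
        have hub' : d ≤ p + walkLength P₂ := by exact_mod_cast hub
        rw [hd, walkLength_append (by simp [hQw.ne_nil] : Q ++ P₁.tail ≠ []),
          walkLength_append hQw.ne_nil]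
        have e1 : walkLength Q = p := by unfold walkLength; omega
        have e2 : 1 ≤ walkLength P₁ := by unfold walkLength; omega
        exact_mod_cast (by omega : d < walkLength Q + walkLength P₁ + walkLength P₂)
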